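/- Let F be a cumulative distribution function on ℝ supported on [a,b], a < b, a,b ∈ ℝ, with mean μ. Then for every p ∈ (0,1) and every n ∈ ℕ, nμ ≤ inf_{S∈𝔖_n} TVaR_p(S) ≤ nμ + (b − a). -/

import Mathlib

open MeasureTheory ProbabilityTheory Set Filter Topology Asymptotics

noncomputable section

/-- Generalized inverse `F⁻¹` of the CDF of the distribution `ν`:
`F⁻¹(t) = inf {x | F(x) ≥ t}` for `t ≠ 0` and `F⁻¹(0) = inf {x | F(x) > 0}`. -/
def qf (ν : Measure ℝ) (t : ℝ) : ℝ :=
  if t = 0 then sInf {x : ℝ | 0 < (ν (Iic x)).toReal}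
  else sInf {x : ℝ | t ≤ (ν (Iic x)).toReal}

/-- Extended-real-valued generalized inverse of the CDF of `ν` (so that
`F⁻¹(1) = +∞` for unbounded upper support and `F⁻¹(0) = −∞` for unbounded
lower support). -/
def qfE (ν : Measure ℝ) (t : ℝ) : EReal :=
  if t = 0 then sInf ((fun x : ℝ => (x : EReal)) '' {x : ℝ | 0 < (ν (Iic x)).toReal})
  else sInf ((fun x : ℝ => (x : EReal)) '' {x : ℝ | t ≤ (ν (Iic x)).toReal})

/-- `μ_{p,q} = (q−p)⁻¹ ∫_p^q F⁻¹(t) dt` as an extended real number. -/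
def muPQ (ν : Measure ℝ) (p q : ℝ) : EReal :=
  (((q - p)⁻¹ : ℝ) : EReal) * ((∫⁻ t in Ioo p q, ENNReal.ofReal (qf ν t) : ENNReal) : EReal)
    - (((q - p)⁻¹ : ℝ) : EReal) * ((∫⁻ t in Ioo p q, ENNReal.ofReal (-(qf ν t)) : ENNReal) : EReal)

/-- `μ_{p,q} = (q−p)⁻¹ ∫_p^q F⁻¹(t) dt` as a real number (when it is finite). -/
def muR (ν : Measure ℝ) (p q : ℝ) : ℝ := (q - p)⁻¹ * ∫ t in Ioo p q, qf ν t

/-- Value-at-Risk of a random variable `X` at level `p`: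
`VaR_p(X) = inf {x | P(X ≤ x) ≥ p}`. -/
def VaR {Ω : Type*} [MeasurableSpace Ω] (P : Measure Ω) (X : Ω → ℝ) (p : ℝ) : ℝ :=
  sInf {x : ℝ | p ≤ (P {ω | X ω ≤ x}).toReal}

/-- Expected Shortfall / Tail-Value-at-Risk at level `p`:
`TVaR_p(X) = (1−p)⁻¹ ∫_p^1 VaR_α(X) dα` (real-valued). -/
def TVaR {Ω : Type*} [MeasurableSpace Ω] (P : Measure Ω) (X : Ω → ℝ) (p : ℝ) : ℝ :=
  (1 - p)⁻¹ * ∫ α in p..(1:ℝ), VaR P X α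

/-- Extended-real-valued Tail-Value-at-Risk at level `p`, allowing the value `+∞`. -/
def TVaRE {Ω : Type*} [MeasurableSpace Ω] (P : Measure Ω) (X : Ω → ℝ) (p : ℝ) : EReal :=
  (((1 - p)⁻¹ : ℝ) : EReal) * ((∫⁻ α in Ioo p 1, ENNReal.ofReal (VaR P X α) : ENNReal) : EReal)
    - (((1 - p)⁻¹ : ℝ) : EReal) * ((∫⁻ α in Ioo p 1, ENNReal.ofReal (-(VaR P X α)) : ENNReal) : EReal)

/-- The set of values `VaR_p(S)` for `S` in the admissible risk class
`𝔖_n(F,…,F) = {X₁ + ⋯ + X_n : X_i ∼ F}` (over all atomless probability spaces). -/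
def VaRvals (ν : Measure ℝ) (n : ℕ) (p : ℝ) : Set ℝ :=
  {r | ∃ (Ω : Type) (mΩ : MeasurableSpace Ω) (P : Measure Ω) (X : Fin n → Ω → ℝ),
    IsProbabilityMeasure P ∧ (∀ i, Measure.map (X i) P = ν) ∧
    r = VaR P (fun ω => ∑ i, X i ω) p}

/-- The set of values `TVaR_p(S)` for `S` in the admissible risk class
`𝔖_n(F,…,F) = {X₁ + ⋯ + X_n : X_i ∼ F}` (over all atomless probability spaces). -/
def TVaRvals (ν : Measure ℝ) (n : ℕ) (p : ℝ) : Set ℝ :=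
  {r | ∃ (Ω : Type) (mΩ : MeasurableSpace Ω) (P : Measure Ω) (X : Fin n → Ω → ℝ),
    IsProbabilityMeasure P ∧ (∀ i, Measure.map (X i) P = ν) ∧
    r = TVaR P (fun ω => ∑ i, X i ω) p}

end

noncomputable section Aux

/-- Monotone, everywhere-defined version of the quantile function of `η`. -/
def QB (η : Measure ℝ) (c : ℝ) (t : ℝ) : ℝ :=
  sInf {x : ℝ | min t 1 ≤ (η (Iic x)).toReal ∧ c ≤ x}

section QBlem
set_option linter.unusedSectionVars false
variable {η : Measure ℝ} [IsProbabilityMeasure η] {c d : ℝ}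
  (hcd : c ≤ d) (hsupp : η (Icc c d)ᶜ = 0)
include hcd hsupp

lemma cdf_zero_of_lt (x : ℝ) (hx : x < c) : η (Iic x) = 0 := by
  refine measure_mono_null ?_ hsupp
  intro y hy
  simp only [mem_compl_iff, mem_Icc, mem_Iic] at *
  intro h
  linarith [h.1]

lemma cdf_one_of_ge (x : ℝ) (hx : d ≤ x) : η (Iic x) = 1 := by
  have h1 : η (Iic x)ᶜ = 0 := by
    refine measure_mono_null ?_ hsupp
    intro y hy
    simp only [mem_compl_iff, mem_Icc, mem_Iic] at *
    intro h
    exact hy (le_trans h.2 hx)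
  have h2 := measure_union_le (μ := η) (Iic x) (Iic x)ᶜ
  rw [union_compl_self, h1, add_zero, measure_univ] at h2
  exact le_antisymm prob_le_one h2

lemma QB_mem_d (t : ℝ) : d ∈ {x : ℝ | min t 1 ≤ (η (Iic x)).toReal ∧ c ≤ x} := by
  constructor
  · rw [cdf_one_of_ge hcd hsupp d le_rfl]; simpa using min_le_right t 1
  · exact hcd

lemma QB_bddBelow (t : ℝ) : BddBelow {x : ℝ | min t 1 ≤ (η (Iic x)).toReal ∧ c ≤ x} :=
  ⟨c, fun _ hx => hx.2⟩

lemma QB_le_d (t : ℝ) : QB η c t ≤ d :=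
  csInf_le (QB_bddBelow hcd hsupp t) (QB_mem_d hcd hsupp t)

lemma c_le_QB (t : ℝ) : c ≤ QB η c t :=
  le_csInf ⟨d, QB_mem_d hcd hsupp t⟩ (fun _ hx => hx.2)

lemma QB_mono : Monotone (QB η c) := by
  intro s t hst
  refine csInf_le_csInf (QB_bddBelow hcd hsupp s) ⟨d, QB_mem_d hcd hsupp t⟩ ?_
  intro x hx
  exact ⟨le_trans (min_le_min_right 1 hst) hx.1, hx.2⟩

lemma QB_galois {t : ℝ} (ht : t ∈ Ioc (0:ℝ) 1) (x : ℝ) :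
    QB η c t ≤ x ↔ t ≤ (η (Iic x)).toReal := by
  have hmin : min t 1 = t := min_eq_left ht.2
  constructor
  · intro h
    have key : t ≤ cdf η (QB η c t) := by
      have hne : {y : ℝ | min t 1 ≤ (η (Iic y)).toReal ∧ c ≤ y}.Nonempty :=
        ⟨d, QB_mem_d hcd hsupp t⟩
      have htd : Tendsto (cdf η) (𝓝[>] (QB η c t)) (𝓝 (cdf η (QB η c t))) :=
        ((cdf η).right_continuous _).mono_left (nhdsWithin_mono _ Ioi_subset_Ici_self)
      refine ge_of_tendsto htd ?_
      filter_upwards [self_mem_nhdsWithin] with y hy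
      obtain ⟨z, hz, hzy⟩ := exists_lt_of_csInf_lt hne hy
      calc t = min t 1 := hmin.symm
        _ ≤ (η (Iic z)).toReal := hz.1
        _ = cdf η z := (cdf_eq_real η z).symm
        _ ≤ cdf η y := monotone_cdf η (le_of_lt hzy)
    calc t ≤ cdf η (QB η c t) := key
      _ ≤ cdf η x := monotone_cdf η h
      _ = (η (Iic x)).toReal := cdf_eq_real η x
  · intro h
    refine csInf_le (QB_bddBelow hcd hsupp t) ⟨hmin.le.trans h, ?_⟩
    by_contra hcx
    rw [cdf_zero_of_lt hcd hsupp x (not_le.1 hcx)] at h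
    simp only [ENNReal.toReal_zero] at h
    exact absurd (lt_of_lt_of_le ht.1 h) (lt_irrefl 0)

lemma QB_eq_qf {t : ℝ} (ht : t ∈ Ioc (0:ℝ) 1) : QB η c t = qf η t := by
  rw [qf, if_neg (ne_of_gt ht.1)]
  have hset : {x : ℝ | min t 1 ≤ (η (Iic x)).toReal ∧ c ≤ x} = {x : ℝ | t ≤ (η (Iic x)).toReal} := by
    ext x
    simp only [mem_setOf_eq, min_eq_left ht.2]
    refine ⟨fun h => h.1, fun h => ⟨h, ?_⟩⟩
    by_contra hcx
    rw [cdf_zero_of_lt hcd hsupp x (not_le.1 hcx)] at h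
    simp only [ENNReal.toReal_zero] at h
    exact absurd (lt_of_lt_of_le ht.1 h) (lt_irrefl 0)
  rw [QB, hset]

instance : IsProbabilityMeasure (volume.restrict (Ioo (0:ℝ) 1)) :=
  ⟨by simp [Real.volume_Ioo]⟩

lemma QB_map : Measure.map (QB η c) (volume.restrict (Ioo (0:ℝ) 1)) = η := by
  have hQm : Measurable (QB η c) := (QB_mono hcd hsupp).measurable
  haveI : IsProbabilityMeasure (Measure.map (QB η c) (volume.restrict (Ioo (0:ℝ) 1))) :=
    Measure.isProbabilityMeasure_map hQm.aemeasurable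
  refine Measure.ext_of_Iic _ _ (fun x => ?_)
  rw [Measure.map_apply hQm measurableSet_Iic,
    Measure.restrict_apply (hQm measurableSet_Iic)]
  have hset : QB η c ⁻¹' Iic x ∩ Ioo 0 1 = Ioo 0 1 ∩ Iic (cdf η x) := by
    ext t
    simp only [mem_inter_iff, mem_preimage, mem_Iic, mem_Ioo]
    constructor
    · rintro ⟨h1, h2⟩
      exact ⟨h2, by rw [cdf_eq_real η x]; exact ((QB_galois hcd hsupp ⟨h2.1, h2.2.le⟩ x).1 h1)⟩
    · rintro ⟨h2, h1⟩
      exact ⟨(QB_galois hcd hsupp ⟨h2.1, h2.2.le⟩ x).2 (h1.trans_eq (cdf_eq_real η x)), h2⟩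
  rw [hset, ← ofReal_cdf η x]
  rcases lt_or_ge (cdf η x) 1 with hlt | hge
  · have h3 : Ioo (0:ℝ) 1 ∩ Iic (cdf η x) = Ioc 0 (cdf η x) := by
      ext t
      simp only [mem_inter_iff, mem_Ioo, mem_Iic, mem_Ioc]
      exact ⟨fun h => ⟨h.1.1, h.2⟩, fun h => ⟨⟨h.1, lt_of_le_of_lt h.2 hlt⟩, h.2⟩⟩
    rw [h3, Real.volume_Ioc, sub_zero]
  · have h1 : cdf η x = 1 := le_antisymm (cdf_le_one η x) hge
    have h3 : Ioo (0:ℝ) 1 ∩ Iic (cdf η x) = Ioo 0 1 := by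
      rw [h1]; exact inter_eq_left.2 (fun t ht => ht.2.le)
    rw [h3, Real.volume_Ioo, h1, sub_zero]

end QBlem

section ExpLem
set_option linter.unusedSectionVars false
variable {Ω : Type*} [MeasurableSpace Ω] {P : Measure Ω} [IsProbabilityMeasure P]
  {ν : Measure ℝ} [IsProbabilityMeasure ν] {a b : ℝ}

lemma aemeasurable_of_map (X : Ω → ℝ) (hX : Measure.map X P = ν) : AEMeasurable X P := by
  by_contra h
  rw [Measure.map_of_not_aemeasurable h] at hX
  have := measure_univ (μ := ν)
  rw [← hX] at this
  simp at this

lemma ae_mem_of_map (X : Ω → ℝ) (hX : Measure.map X P = ν)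
    (hsupp : ν (Icc a b)ᶜ = 0) : ∀ᵐ ω ∂P, X ω ∈ Icc a b := by
  have hm : P (X ⁻¹' (Icc a b)ᶜ) = 0 := by
    rw [← Measure.map_apply_of_aemeasurable (aemeasurable_of_map X hX)
      measurableSet_Icc.compl, hX]
    exact hsupp
  filter_upwards [measure_eq_zero_iff_ae_notMem.1 hm] with ω hω
  simpa using hω

lemma integrable_of_map (X : Ω → ℝ) (hX : Measure.map X P = ν)
    (hsupp : ν (Icc a b)ᶜ = 0) : Integrable X P := by
  refine Integrable.mono' (integrable_const (|a| + |b|))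
    (aemeasurable_of_map X hX).aestronglyMeasurable ?_
  filter_upwards [ae_mem_of_map X hX hsupp] with ω hω
  rw [Real.norm_eq_abs, abs_le]
  constructor
  · have := hω.1; have := neg_abs_le a; have := abs_nonneg b; linarith
  · have := hω.2; have := le_abs_self b; have := abs_nonneg a; linarith

lemma integral_eq_of_map (X : Ω → ℝ) (hX : Measure.map X P = ν) :
    ∫ ω, X ω ∂P = ∫ x, x ∂ν := by
  rw [← hX]
  exact (integral_map (aemeasurable_of_map X hX) aestronglyMeasurable_id).symm

end ExpLem

section VaRLem
set_option linter.unusedSectionVars false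
variable {Ω : Type*} [MeasurableSpace Ω] {P : Measure Ω} [IsProbabilityMeasure P]
  {c d p : ℝ} {S : Ω → ℝ}

lemma prob_eq_one_of_compl_null (A : Set Ω) (h : P Aᶜ = 0) : P A = 1 := by
  have h2 := measure_union_le (μ := P) A Aᶜ
  rw [union_compl_self, h, add_zero, measure_univ] at h2
  exact le_antisymm prob_le_one h2

variable (hae : ∀ᵐ ω ∂P, S ω ∈ Icc c d)
include hae

lemma prob_le_top (x : ℝ) (hx : d ≤ x) : P {ω | S ω ≤ x} = 1 := by
  refine prob_eq_one_of_compl_null _ ?_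
  rw [← le_zero_iff]
  calc P {ω | S ω ≤ x}ᶜ ≤ P {ω | ¬ (S ω ∈ Icc c d)} := by
        refine measure_mono (fun ω hω => ?_)
        simp only [mem_compl_iff, mem_setOf_eq, not_le] at hω ⊢
        intro hIcc
        exact absurd (le_trans hIcc.2 hx) (not_le.2 hω)
    _ = 0 := hae

lemma prob_eq_zero_of_lt (x : ℝ) (hx : x < c) : P {ω | S ω ≤ x} = 0 := by
  rw [← le_zero_iff]
  calc P {ω | S ω ≤ x} ≤ P {ω | ¬ (S ω ∈ Icc c d)} := by
        refine measure_mono (fun ω hω => ?_)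
        simp only [mem_setOf_eq] at hω ⊢
        intro hIcc
        exact absurd (le_trans hIcc.1 hω) (not_le.2 hx)
    _ = 0 := hae

lemma VaR_set_mem (α : ℝ) (hα : α ≤ 1) :
    d ∈ {x : ℝ | α ≤ (P {ω | S ω ≤ x}).toReal} := by
  simp only [mem_setOf_eq, prob_le_top hae d le_rfl]
  simpa using hα

lemma VaR_set_bdd (α : ℝ) (hα : 0 < α) :
    {x : ℝ | α ≤ (P {ω | S ω ≤ x}).toReal} ⊆ Ici c := by
  intro x hx
  simp only [mem_setOf_eq] at hx
  by_contra hcx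
  rw [prob_eq_zero_of_lt hae x (not_le.1 hcx)] at hx
  simp only [ENNReal.toReal_zero] at hx
  exact absurd (lt_of_lt_of_le hα hx) (lt_irrefl 0)

lemma VaR_le_d (α : ℝ) (hα0 : 0 < α) (hα : α ≤ 1) : VaR P S α ≤ d :=
  csInf_le ⟨c, fun x hx => VaR_set_bdd hae α hα0 hx⟩ (VaR_set_mem hae α hα)

lemma c_le_VaR (α : ℝ) (hα : 0 < α) (hα1 : α ≤ 1) : c ≤ VaR P S α :=
  le_csInf ⟨d, VaR_set_mem hae α hα1⟩ (fun x hx => VaR_set_bdd hae α hα hx)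

lemma VaR_monoOn (hp : 0 < p) : MonotoneOn (VaR P S) (Icc p 1) := by
  intro α hα β hβ hab
  refine csInf_le_csInf ⟨c, fun x hx => VaR_set_bdd hae α (lt_of_lt_of_le hp hα.1) hx⟩
    ⟨d, VaR_set_mem hae β hβ.2⟩ ?_
  intro x hx
  exact le_trans hab hx

lemma TVaR_le_d (hp : p ∈ Ioo (0:ℝ) 1) : TVaR P S p ≤ d := by
  have h1p : (0:ℝ) < 1 - p := by linarith [hp.2]
  have hint : IntervalIntegrable (VaR P S) volume p 1 := by
    refine MonotoneOn.intervalIntegrable ?_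
    rw [uIcc_of_le hp.2.le]
    exact VaR_monoOn hae hp.1
  have hle : ∫ α in p..(1:ℝ), VaR P S α ≤ (1 - p) * d := by
    have := intervalIntegral.integral_mono_on hp.2.le hint intervalIntegrable_const
      (fun α hα => VaR_le_d hae α (lt_of_lt_of_le hp.1 hα.1) hα.2)
    rw [intervalIntegral.integral_const, smul_eq_mul] at this
    linarith
  rw [TVaR]
  calc (1 - p)⁻¹ * ∫ α in p..(1:ℝ), VaR P S α
      ≤ (1 - p)⁻¹ * ((1 - p) * d) :=
        mul_le_mul_of_nonneg_left hle (by positivity)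
    _ = d := by field_simp

end VaRLem

section LowerLem
set_option linter.unusedSectionVars false
variable {Ω : Type*} [MeasurableSpace Ω] {P : Measure Ω} [IsProbabilityMeasure P]
  {η : Measure ℝ} [IsProbabilityMeasure η] {c d p : ℝ} {S : Ω → ℝ}

lemma VaR_eq_QB (hcd : c ≤ d) (hsupp : η (Icc c d)ᶜ = 0)
    (hX : Measure.map S P = η) {α : ℝ} (hα : α ∈ Ioc (0:ℝ) 1) :
    VaR P S α = QB η c α := by
  have hSm : AEMeasurable S P := aemeasurable_of_map S hX
  have hset : ∀ x : ℝ, P {ω | S ω ≤ x} = η (Iic x) := by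
    intro x
    rw [← hX, Measure.map_apply_of_aemeasurable hSm measurableSet_Iic]
    rfl
  rw [VaR, QB_eq_qf hcd hsupp hα, qf, if_neg (ne_of_gt hα.1)]
  congr 1
  ext x
  simp only [mem_setOf_eq, hset]

lemma mean_le_TVaR (hcd : c ≤ d) (hsupp : η (Icc c d)ᶜ = 0)
    (hp : p ∈ Ioo (0:ℝ) 1) (hX : Measure.map S P = η) :
    ∫ x, x ∂η ≤ TVaR P S p := by
  have h1p : (0:ℝ) < 1 - p := by linarith [hp.2]
  have hQmono : Monotone (QB η c) := QB_mono hcd hsupp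
  have hQm : Measurable (QB η c) := hQmono.measurable
  have hint : ∀ u v : ℝ, IntervalIntegrable (QB η c) volume u v :=
    fun u v => (hQmono.monotoneOn _).intervalIntegrable
  -- rewrite TVaR using QB
  have hTV : TVaR P S p = (1 - p)⁻¹ * ∫ α in p..(1:ℝ), QB η c α := by
    rw [TVaR]
    congr 1
    refine intervalIntegral.integral_congr (fun α hα => ?_)
    rw [uIcc_of_le hp.2.le] at hα
    exact VaR_eq_QB hcd hsupp hX ⟨lt_of_lt_of_le hp.1 hα.1, hα.2⟩
  -- mean via quantile
  have hmean : ∫ x, x ∂η = ∫ t in (0:ℝ)..1, QB η c t := by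
    have h := integral_map (μ := volume.restrict (Ioo (0:ℝ) 1)) (φ := QB η c)
      hQm.aemeasurable (f := fun x => x) aestronglyMeasurable_id
    rw [QB_map hcd hsupp] at h
    rw [h, intervalIntegral.integral_of_le zero_le_one, integral_Ioc_eq_integral_Ioo]
  have hadd : ∫ t in (0:ℝ)..1, QB η c t
      = (∫ t in (0:ℝ)..p, QB η c t) + ∫ t in p..(1:ℝ), QB η c t :=
    (intervalIntegral.integral_add_adjacent_intervals (hint 0 p) (hint p 1)).symm
  set I0 := ∫ t in (0:ℝ)..p, QB η c t with hI0
  set I1 := ∫ t in p..(1:ℝ), QB η c t with hI1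
  have hb1 : (1 - p) * QB η c p ≤ I1 := by
    have := intervalIntegral.integral_mono_on hp.2.le intervalIntegrable_const (hint p 1)
      (fun x hx => hQmono hx.1)
    rw [intervalIntegral.integral_const, smul_eq_mul] at this
    linarith
  have hb0 : I0 ≤ p * QB η c p := by
    have := intervalIntegral.integral_mono_on hp.1.le (hint 0 p) intervalIntegrable_const
      (fun x hx => hQmono hx.2)
    rw [intervalIntegral.integral_const, smul_eq_mul] at this
    linarith
  rw [hTV, hmean, hadd]
  rw [inv_mul_eq_div, le_div_iff₀ h1p]
  nlinarith [mul_le_mul_of_nonneg_left hb0 h1p.le,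
    mul_le_mul_of_nonneg_left hb1 hp.1.le]

end LowerLem

section Witness
set_option linter.unusedSectionVars false
variable {ν : Measure ℝ} [IsProbabilityMeasure ν] {a b p : ℝ}

instance : IsProbabilityMeasure (volume : Measure (AddCircle (1:ℝ))) :=
  ⟨by rw [AddCircle.measure_univ]; simp⟩

lemma tele_sum {Q : ℝ → ℝ} (hQmono : Monotone Q) (hQa : ∀ t, a ≤ Q t) (hQb : ∀ t, Q t ≤ b)
    {n : ℕ} (hn : 0 < n) (v v' : ℝ) (hvv' : v - v' ≤ 1/(n:ℝ)) :
    (∑ k ∈ Finset.range n, Q (v + (k:ℝ)/(n:ℝ)))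
      ≤ (∑ k ∈ Finset.range n, Q (v' + (k:ℝ)/(n:ℝ))) + (b - a) := by
  have hnpos : (0:ℝ) < n := Nat.cast_pos.2 hn
  obtain ⟨N, rfl⟩ : ∃ N, n = N + 1 := ⟨n - 1, (Nat.succ_pred_eq_of_pos hn).symm⟩
  rw [Finset.sum_range_succ, Finset.sum_range_succ']
  have hterm : ∀ k ∈ Finset.range N, Q (v + (k:ℝ)/((N+1:ℕ):ℝ))
      ≤ Q (v' + ((k+1:ℕ):ℝ)/((N+1:ℕ):ℝ)) := by
    intro k _
    apply hQmono
    push_cast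
    push_cast at hvv'
    have hsplit : ((k:ℝ) + 1) / ((N:ℝ) + 1) = (k:ℝ)/((N:ℝ)+1) + 1/((N:ℝ)+1) := by ring
    linarith [hsplit, hvv']
  have h1 := Finset.sum_le_sum hterm
  have h2 : Q (v + (N:ℝ)/((N+1:ℕ):ℝ)) ≤ b := hQb _
  have h3 : a ≤ Q (v' + ((0:ℕ):ℝ)/((N+1:ℕ):ℝ)) := hQa _
  linarith

lemma exists_witness (hab : a ≤ b) (hsupp : ν (Icc a b)ᶜ = 0)
    (hp : p ∈ Ioo (0:ℝ) 1) (n : ℕ) (hn : 0 < n) :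
    ∃ r ∈ TVaRvals ν n p, r ≤ (n : ℝ) * (∫ x, x ∂ν) + (b - a) := by
  haveI : NeZero n := ⟨hn.ne'⟩
  have hn0 : ((n:ℝ)) ≠ 0 := Nat.cast_ne_zero.2 hn.ne'
  have hnpos : (0:ℝ) < n := Nat.cast_pos.2 hn
  set Q : ℝ → ℝ := QB ν a with hQ
  have hQmono : Monotone Q := QB_mono hab hsupp
  have hQm : Measurable Q := hQmono.measurable
  have hQa : ∀ t, a ≤ Q t := fun t => c_le_QB hab hsupp t
  have hQb : ∀ t, Q t ≤ b := fun t => QB_le_d hab hsupp t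
  -- the representative map off the circle
  set e : AddCircle (1:ℝ) → ℝ :=
    fun ω => ((AddCircle.measurableEquivIoc 1 0 ω : Ioc (0:ℝ) (0+1)) : ℝ) with he
  have he_meas : Measurable e :=
    measurable_subtype_coe.comp (AddCircle.measurableEquivIoc 1 0).measurable
  have he_mem : ∀ ω, e ω ∈ Ioc (0:ℝ) 1 := by
    intro ω
    have h := (AddCircle.measurableEquivIoc 1 0 ω).2
    exact ⟨h.1, le_trans h.2 (by norm_num)⟩
  have he_mk : ∀ x : ℝ, x ∈ Ioc (0:ℝ) 1 → e ((x : ℝ) : AddCircle (1:ℝ)) = x := by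
    intro x hx
    have hx' : x ∈ Ioc (0:ℝ) (0+1) := by rwa [zero_add]
    have h : (AddCircle.equivIoc 1 0) ((x : ℝ) : AddCircle (1:ℝ)) = ⟨x, hx'⟩ := by
      rw [Equiv.apply_eq_iff_eq_symm_apply]; rfl
    exact congrArg Subtype.val h
  have hmk_e : ∀ ω : AddCircle (1:ℝ), ((e ω : ℝ) : AddCircle (1:ℝ)) = ω := fun ω =>
    (AddCircle.measurableEquivIoc 1 0).symm_apply_apply ω
  have hmap_e : Measure.map e volume = volume.restrict (Ioo (0:ℝ) 1) := by
    have h0 := (AddCircle.measurePreserving_mk 1 0).map_eq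
    rw [zero_add] at h0
    have h1 : Measure.map e volume
        = Measure.map e (Measure.map ((↑) : ℝ → AddCircle (1:ℝ)) (volume.restrict (Ioc 0 1))) := by
      rw [h0]
    rw [h1, Measure.map_map he_meas AddCircle.measurable_mk']
    have h2 : Measure.map (e ∘ ((↑) : ℝ → AddCircle (1:ℝ))) (volume.restrict (Ioc (0:ℝ) 1))
        = Measure.map id (volume.restrict (Ioc (0:ℝ) 1)) := by
      refine Measure.map_congr ?_
      rw [Filter.EventuallyEq, ae_restrict_iff' measurableSet_Ioc]
      exact Eventually.of_forall (fun x hx => he_mk x hx)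
    rw [h2, Measure.map_id, Measure.restrict_congr_set Ioo_ae_eq_Ioc.symm]
  -- the random variables
  set X : Fin n → AddCircle (1:ℝ) → ℝ :=
    fun i ω => Q (e (ω + ((((i:ℕ):ℝ)/(n:ℝ) : ℝ) : AddCircle (1:ℝ)))) with hX
  have hlaw : ∀ i, Measure.map (X i) volume = ν := by
    intro i
    have hcomp : X i = (Q ∘ e) ∘ (fun ω => ω + ((((i:ℕ):ℝ)/(n:ℝ) : ℝ) : AddCircle (1:ℝ))) := rfl
    rw [hcomp, ← Measure.map_map (hQm.comp he_meas) (measurable_add_const _),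
      map_add_right_eq_self volume _, ← Measure.map_map hQm he_meas, hmap_e]
    exact QB_map hab hsupp
  -- the deterministic profile of the sum
  set T : ℝ → ℝ := fun v => ∑ k ∈ Finset.range n, Q (v + (k:ℝ) / (n:ℝ)) with hT
  have hTlb : ∀ v, (n:ℝ) * a ≤ T v := by
    intro v
    calc (n:ℝ) * a = ∑ _k ∈ Finset.range n, a := by
          rw [Finset.sum_const, Finset.card_range, nsmul_eq_mul]
      _ ≤ T v := Finset.sum_le_sum (fun k _ => hQa _)
  have h1n : (0:ℝ) < 1/(n:ℝ) := by positivity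
  set A : Set ℝ := T '' Ioo 0 (1/(n:ℝ)) with hA
  have hAne : A.Nonempty := by
    refine ⟨T (1/(2*(n:ℝ))), mem_image_of_mem _ ⟨by positivity, ?_⟩⟩
    rw [div_lt_div_iff₀ (by positivity) hnpos]
    nlinarith
  have hAbdd : BddBelow A := ⟨(n:ℝ)*a, by rintro y ⟨v, hv, rfl⟩; exact hTlb v⟩
  set m := sInf A with hm
  have hosc : ∀ v ∈ Ioo (0:ℝ) (1/(n:ℝ)), ∀ v' ∈ Ioo (0:ℝ) (1/(n:ℝ)), T v ≤ T v' + (b - a) := by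
    intro v hv v' hv'
    exact tele_sum hQmono hQa hQb hn v v' (by simp only [mem_Ioo] at hv hv'; linarith [hv.2, hv'.1])
  -- the bad (null) set of sample points
  set Bad : Set (AddCircle (1:ℝ)) :=
    e ⁻¹' (⋃ k ∈ Finset.range (n+1), {((k:ℕ):ℝ)/(n:ℝ)}) with hBad
  have hBm : MeasurableSet (⋃ k ∈ Finset.range (n+1), {((k:ℕ):ℝ)/(n:ℝ)}) :=
    MeasurableSet.biUnion (Finset.range (n+1)).countable_toSet
      (fun k _ => measurableSet_singleton _)
  have hBadnull : volume Bad = 0 := by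
    rw [hBad, ← Measure.map_apply he_meas hBm, hmap_e, Measure.restrict_apply hBm]
    refine measure_mono_null inter_subset_left ?_
    refine measure_biUnion_null_iff (Finset.range (n+1)).countable_toSet |>.2 ?_
    intro k _
    exact measure_singleton _
  -- pointwise identification of the sum with T on the good set
  have hgood : ∀ ω, ω ∉ Bad → ∃ v ∈ Ioo (0:ℝ) (1/(n:ℝ)), (∑ i : Fin n, X i ω) = T v := by
    intro ω hω
    set u : ℝ := e ω with hu
    have huIoc : u ∈ Ioc (0:ℝ) 1 := he_mem ω
    have hne : ∀ k, k ≤ n → u ≠ ((k:ℕ):ℝ)/(n:ℝ) := by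
      intro k hk hcontra
      refine hω ?_
      rw [hBad, mem_preimage]
      simp only [Set.mem_iUnion, Set.mem_singleton_iff]
      exact ⟨k, Finset.mem_range.2 (Nat.lt_succ_of_le hk), hcontra⟩
    -- floor data
    set j : ℕ := ⌊(n:ℝ) * u⌋₊ with hj
    have hnu_pos : (0:ℝ) < (n:ℝ) * u := by
      have := huIoc.1; positivity
    have hu1 : u < 1 := by
      rcases lt_or_eq_of_le huIoc.2 with h | h
      · exact h
      · exact absurd (by rw [h]; field_simp : u = ((n:ℕ):ℝ)/(n:ℝ)) (hne n le_rfl)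
    have hj_lt : j < n := Nat.floor_lt (le_of_lt hnu_pos) |>.2 (by nlinarith)
    set v : ℝ := u - (j:ℝ)/(n:ℝ) with hv
    have hjle : (j:ℝ) ≤ (n:ℝ) * u := Nat.floor_le (le_of_lt hnu_pos)
    have hjgt : (n:ℝ) * u < (j:ℝ) + 1 := Nat.lt_floor_add_one _
    have hv0 : 0 < v := by
      rcases lt_or_eq_of_le ((div_le_iff₀ hnpos).2 (by linarith : (j:ℝ) ≤ u * n)) with h | h
      · rw [hv]; linarith
      · exact absurd h.symm (hne j hj_lt.le)
    have hv1 : v < 1/(n:ℝ) := by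
      rw [hv, sub_lt_iff_lt_add, ← add_div, lt_div_iff₀ hnpos]
      linarith
    refine ⟨v, ⟨hv0, hv1⟩, ?_⟩
    -- identify each summand
    have hXi : ∀ i : Fin n, X i ω = Q (v + (((j + (i:ℕ)) % n : ℕ):ℝ)/(n:ℝ)) := by
      intro i
      have hdm := Nat.div_add_mod (j + (i:ℕ)) n
      set q : ℕ := (j + (i:ℕ)) / n with hq
      set r : ℕ := (j + (i:ℕ)) % n with hr
      have hr_lt : r < n := Nat.mod_lt _ hn
      have harg : u + ((i:ℕ):ℝ)/(n:ℝ) = (v + (r:ℝ)/(n:ℝ)) + (q:ℕ) := by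
        rw [hv]
        have hjir : ((j:ℝ) + ((i:ℕ):ℝ)) = (n:ℝ) * (q:ℝ) + (r:ℝ) := by exact_mod_cast hdm.symm
        field_simp
        linarith [hjir]
      have hcirc : ω + ((((i:ℕ):ℝ)/(n:ℝ) : ℝ) : AddCircle (1:ℝ))
          = (((v + (r:ℝ)/(n:ℝ)) : ℝ) : AddCircle (1:ℝ)) := by
        have h1 : ω = ((u : ℝ) : AddCircle (1:ℝ)) := (hmk_e ω).symm
        rw [h1]
        have h2 : ((u : ℝ) : AddCircle (1:ℝ)) + ((((i:ℕ):ℝ)/(n:ℝ) : ℝ) : AddCircle (1:ℝ))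
            = (((u + ((i:ℕ):ℝ)/(n:ℝ)) : ℝ) : AddCircle (1:ℝ)) := rfl
        rw [h2, harg]
        have h3 : (((v + (r:ℝ)/(n:ℝ) + (q:ℕ)) : ℝ) : AddCircle (1:ℝ))
            = (((v + (r:ℝ)/(n:ℝ)) : ℝ) : AddCircle (1:ℝ)) + (((q:ℕ) : ℝ) : AddCircle (1:ℝ)) := rfl
        rw [h3]
        have h4 : (((q:ℕ) : ℝ) : AddCircle (1:ℝ)) = 0 := by
          rw [AddCircle.coe_eq_zero_iff]
          exact ⟨q, by simp⟩
        rw [h4, add_zero]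
      have hvr_mem : v + (r:ℝ)/(n:ℝ) ∈ Ioc (0:ℝ) 1 := by
        constructor
        · have hrn : (0:ℝ) ≤ (r:ℝ)/(n:ℝ) := by positivity
          exact add_pos_of_pos_of_nonneg hv0 hrn
        · have hr' : (r:ℝ) ≤ (n:ℝ) - 1 := by
            have : (r:ℝ) + 1 ≤ (n:ℝ) := by exact_mod_cast Nat.succ_le_of_lt hr_lt
            linarith
          have hrq : (r:ℝ)/(n:ℝ) ≤ ((n:ℝ)-1)/(n:ℝ) := by gcongr
          have h1n' : 1/(n:ℝ) + ((n:ℝ)-1)/(n:ℝ) = 1 := by field_simp; ring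
          linarith
      rw [hX]
      simp only
      rw [hcirc, he_mk _ hvr_mem]
    rw [Finset.sum_congr rfl (fun i _ => hXi i)]
    -- reindex
    set jf : Fin n := ⟨j, hj_lt⟩ with hjf
    have hjfv : ∀ i : Fin n, ((j + (i:ℕ)) % n : ℕ) = ((jf + i : Fin n) : ℕ) := by
      intro i
      rw [Fin.add_def]
    have hstep : (∑ i : Fin n, Q (v + (((j + (i:ℕ)) % n : ℕ):ℝ)/(n:ℝ)))
        = ∑ i : Fin n, Q (v + (((jf + i : Fin n) : ℕ):ℝ)/(n:ℝ)) := by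
      refine Finset.sum_congr rfl (fun i _ => by rw [hjfv i])
    rw [hstep]
    have hbij : (∑ i : Fin n, Q (v + (((jf + i : Fin n) : ℕ):ℝ)/(n:ℝ)))
        = ∑ k : Fin n, Q (v + ((k : ℕ):ℝ)/(n:ℝ)) :=
      Fintype.sum_bijective (jf + ·) (Equiv.addLeft jf).bijective _ _ (fun i => rfl)
    rw [hbij]
    exact Fin.sum_univ_eq_sum_range (fun k => Q (v + (k:ℝ)/(n:ℝ))) n
  -- almost sure bounds on the sum
  set S : AddCircle (1:ℝ) → ℝ := fun ω => ∑ i : Fin n, X i ω with hS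
  have hae_good : ∀ᵐ ω : AddCircle (1:ℝ), ω ∉ Bad := by
    rw [ae_iff]
    simpa using hBadnull
  have hae_bounds : ∀ᵐ ω : AddCircle (1:ℝ), S ω ∈ Icc m (m + (b - a)) := by
    filter_upwards [hae_good] with ω hω
    obtain ⟨v, hv, hSv⟩ := hgood ω hω
    constructor
    · rw [hS]; simp only; rw [hSv]
      exact csInf_le hAbdd (mem_image_of_mem _ hv)
    · rw [hS]; simp only; rw [hSv]
      have hlb : T v - (b - a) ≤ m := by
        refine le_csInf hAne ?_
        rintro y ⟨v', hv', rfl⟩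
        linarith [hosc v hv v' hv']
      linarith
  -- expectation
  have hXint : ∀ i : Fin n, Integrable (X i) volume := fun i =>
    integrable_of_map (X i) (hlaw i) hsupp
  have hSint : Integrable S volume := integrable_finset_sum _ (fun i _ => hXint i)
  have hES : ∫ ω, S ω ∂(volume : Measure (AddCircle (1:ℝ))) = (n:ℝ) * (∫ x, x ∂ν) := by
    rw [hS]
    simp only
    rw [integral_finset_sum _ (fun i _ => hXint i)]
    have : ∀ i : Fin n, ∫ ω, X i ω ∂(volume : Measure (AddCircle (1:ℝ))) = ∫ x, x ∂ν :=
      fun i => integral_eq_of_map (X i) (hlaw i)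
    rw [Finset.sum_congr rfl (fun i _ => this i)]
    simp [mul_comm]
  have hm_le : m ≤ (n:ℝ) * (∫ x, x ∂ν) := by
    rw [← hES]
    have h1 : ∫ ω, (m : ℝ) ∂(volume : Measure (AddCircle (1:ℝ))) = m := by simp
    rw [← h1]
    refine integral_mono_ae (integrable_const m) hSint ?_
    filter_upwards [hae_bounds] with ω hω
    exact hω.1
  -- conclude
  refine ⟨TVaR (volume : Measure (AddCircle (1:ℝ))) S p, ?_, ?_⟩
  · exact ⟨AddCircle (1:ℝ), inferInstance, volume, X, inferInstance, hlaw, rfl⟩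
  · have := TVaR_le_d hae_bounds hp
    linarith

end Witness

end Aux

/-- **Corollary 3.2 (a).** If `F` is a distribution on `[a,b]`, `a < b`, with mean `μ`,
then for `p ∈ (0,1)`, `nμ ≤ inf_{S ∈ 𝔖_n} TVaR_p(S) ≤ nμ + (b − a)`. -/
theorem inf_TVaR_bounds_bounded_support
    (ν : Measure ℝ) [IsProbabilityMeasure ν] (a b μ : ℝ) (hab : a < b)
    (hsupp : ν (Icc a b)ᶜ = 0) (hμ : μ = ∫ x, x ∂ν)
    (p : ℝ) (hp : p ∈ Ioo (0:ℝ) 1) (n : ℕ) (hn : 0 < n) :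
    (n : ℝ) * μ ≤ sInf (TVaRvals ν n p) ∧
    sInf (TVaRvals ν n p) ≤ (n : ℝ) * μ + (b - a) := by
  subst hμ
  have hab' : a ≤ b := hab.le
  -- every element of the admissible class has `TVaR ≥ n μ`
  have hlower : ∀ r ∈ TVaRvals ν n p, (n:ℝ) * (∫ x, x ∂ν) ≤ r := by
    rintro r ⟨O, mO, P, X, hP, hlaw, rfl⟩
    haveI := hP
    set S : O → ℝ := fun ω => ∑ i, X i ω with hSdef
    have hSm : AEMeasurable S P := by
      apply Finset.aemeasurable_fun_sum
      intro i _
      exact aemeasurable_of_map (X i) (hlaw i)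
    set η : Measure ℝ := Measure.map S P with hη
    haveI : IsProbabilityMeasure η := Measure.isProbabilityMeasure_map hSm
    have hn0 : (0:ℝ) ≤ (n:ℝ) := Nat.cast_nonneg n
    have hcd : (n:ℝ)*a ≤ (n:ℝ)*b := by nlinarith
    have hηsupp : η (Icc ((n:ℝ)*a) ((n:ℝ)*b))ᶜ = 0 := by
      rw [hη, Measure.map_apply_of_aemeasurable hSm measurableSet_Icc.compl]
      have hae : ∀ᵐ ω ∂P, ∀ i, X i ω ∈ Icc a b :=
        ae_all_iff.2 fun i => ae_mem_of_map (X i) (hlaw i) hsupp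
      rw [← le_zero_iff]
      calc P (S ⁻¹' (Icc ((n:ℝ)*a) ((n:ℝ)*b))ᶜ)
          ≤ P {ω | ¬ ∀ i, X i ω ∈ Icc a b} := by
            refine measure_mono fun ω hω => ?_
            simp only [mem_preimage, mem_compl_iff, mem_Icc, not_and_or, not_le] at hω
            simp only [mem_setOf_eq]
            intro hall
            have h1 : (n:ℝ)*a ≤ S ω := by
              rw [hSdef]
              calc (n:ℝ)*a = ∑ _i : Fin n, a := by
                    rw [Finset.sum_const, Finset.card_univ, Fintype.card_fin, nsmul_eq_mul]
                _ ≤ ∑ i, X i ω := Finset.sum_le_sum fun i _ => (hall i).1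
            have h2 : S ω ≤ (n:ℝ)*b := by
              rw [hSdef]
              calc ∑ i, X i ω ≤ ∑ _i : Fin n, b := Finset.sum_le_sum fun i _ => (hall i).2
                _ = (n:ℝ)*b := by
                    rw [Finset.sum_const, Finset.card_univ, Fintype.card_fin, nsmul_eq_mul]
            rcases hω with h | h
            · exact absurd h1 (not_le.2 h)
            · exact absurd h2 (not_le.2 h)
        _ = 0 := ae_iff.1 hae
    have hmean : ∫ x, x ∂η = (n:ℝ) * (∫ x, x ∂ν) := by
      have h1 : ∫ ω, S ω ∂P = ∫ x, x ∂η := integral_eq_of_map (ν := η) S rfl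
      have h2 : ∫ ω, S ω ∂P = (n:ℝ) * (∫ x, x ∂ν) := by
        rw [hSdef]
        simp only
        rw [integral_finset_sum _ (fun i _ => integrable_of_map (X i) (hlaw i) hsupp)]
        have h3 : ∀ i : Fin n, ∫ ω, X i ω ∂P = ∫ x, x ∂ν := fun i =>
          integral_eq_of_map (X i) (hlaw i)
        rw [Finset.sum_congr rfl fun i _ => h3 i]
        simp [mul_comm]
      rw [← h1, h2]
    calc (n:ℝ) * (∫ x, x ∂ν) = ∫ x, x ∂η := hmean.symm
      _ ≤ TVaR P S p := mean_le_TVaR hcd hηsupp hp rfl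
  obtain ⟨r₀, hr₀mem, hr₀le⟩ := exists_witness hab' hsupp hp n hn
  constructor
  · exact le_csInf ⟨r₀, hr₀mem⟩ hlower
  · exact le_trans (csInf_le ⟨(n:ℝ) * (∫ x, x ∂ν), fun r hr => hlower r hr⟩ hr₀mem) hr₀le
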